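/- Let a₀, a_d ∈ ℝ, 0 < d < T, let f : [0,T] → ℝ and g : [0,T] → ℝ be continuous. Suppose y solves y'(t) = −a₀ y(t) − a_d y(t−d) + f(t) on [0,T] with y(τ) = 0 for τ ∈ [−d, 0], and p solves the anticipated adjoint equation p'(t) = a₀ p(t) + a_d p(t+d) − g(t) on [0,T] with p(s) = 0 for s ∈ (T, T+d] and terminal value p(T) = p_T. Then p_T y(T) = ∫₀ᵀ ( p(s) f(s) − g(s) y(s) ) ds. -/

import Mathlib

open Set intervalIntegral MeasureTheory

/-- duality between the forward delay variational equation (zero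
history) and the backward anticipated adjoint equation. -/
theorem stmt_10 (a₀ a_d d T p_T : ℝ) (hd : 0 < d) (hdT : d < T)
    (f g : ℝ → ℝ) (hf : ContinuousOn f (Icc 0 T)) (hg : ContinuousOn g (Icc 0 T))
    (y : ℝ → ℝ) (hyc : ContinuousOn y (Icc (-d) T))
    (hyhist : ∀ τ ∈ Icc (-d) 0, y τ = 0)
    (hy : ∀ t ∈ Icc 0 T,
      y t = ∫ s in (0:ℝ)..t, (-a₀ * y s - a_d * y (s - d) + f s))
    (p : ℝ → ℝ) (hpc : ContinuousOn p (Icc 0 T))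
    (hpterm : ∀ s ∈ Ioc T (T + d), p s = 0) (hpT : p T = p_T)
    (hp : ∀ t ∈ Icc 0 T,
      p t = p_T + ∫ s in t..T, (-a₀ * p s - a_d * p (s + d) + g s)) :
    p_T * y T = ∫ s in (0:ℝ)..T, (p s * f s - g s * y s) := by
  have hT0 : (0:ℝ) < T := hd.trans hdT
  set e : ℝ := T - d with he
  have he0 : 0 < e := sub_pos.2 hdT
  have heT : e < T := sub_lt_self T hd
  set G : ℝ → ℝ := fun s => -a₀ * y s - a_d * y (s - d) + f s with hG
  set F : ℝ → ℝ := fun s => -a₀ * p s - a_d * p (s + d) + g s with hF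
  have hsub1 : Icc (0:ℝ) T ⊆ Icc (-d) T := Icc_subset_Icc (by linarith) le_rfl
  have hycT : ContinuousOn y (Icc 0 T) := hyc.mono hsub1
  -- continuity of delayed y
  have hycd : ContinuousOn (fun s => y (s - d)) (Icc 0 T) := by
    apply hyc.comp ((continuous_id.sub continuous_const).continuousOn)
    intro s hs
    obtain ⟨hs1, hs2⟩ := hs
    simp only [Pi.sub_apply, id_eq]
    exact ⟨by linarith, by linarith⟩
  -- continuity of G
  have hGc : ContinuousOn G (Icc 0 T) := by
    exact ((continuousOn_const.mul hycT).sub (continuousOn_const.mul hycd)).add hf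
  -- continuity of shifted p on [0,e]
  have hpshift : ContinuousOn (fun s => p (s + d)) (Icc 0 e) := by
    apply hpc.comp ((continuous_id.add continuous_const).continuousOn)
    intro s hs
    obtain ⟨hs1, hs2⟩ := hs
    rw [he] at hs2
    simp only [Pi.add_apply, id_eq]
    exact ⟨by linarith, by linarith⟩
  have hpshift0 : ∀ s ∈ Ioc e T, p (s + d) = 0 := fun s hs =>
    hpterm (s + d) ⟨by linarith [hs.1], by linarith [hs.2]⟩
  -- interval integrability of the shifted-p products
  have hAcont : ContinuousOn (fun s => p (s + d) * y s) (Icc 0 e) :=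
    hpshift.mul (hycT.mono (Icc_subset_Icc le_rfl heT.le))
  have hA1 : IntervalIntegrable (fun s => p (s + d) * y s) volume 0 e := by
    apply hAcont.intervalIntegrable_of_Icc he0.le
  have hA2 : IntervalIntegrable (fun s => p (s + d) * y s) volume e T := by
    apply (_root_.intervalIntegrable_const (c := (0:ℝ))).congr
    rw [uIoc_of_le heT.le]
    intro s hs
    beta_reduce
    rw [hpshift0 s hs, zero_mul]
  have hAint : IntervalIntegrable (fun s => p (s + d) * y s) volume 0 T := hA1.trans hA2
  -- B = p u * y (u - d)
  have hBcont : ContinuousOn (fun u => p u * y (u - d)) (Icc 0 T) := hpc.mul hycd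
  have hBint : IntervalIntegrable (fun u => p u * y (u - d)) volume 0 T :=
    hBcont.intervalIntegrable_of_Icc hT0.le
  -- C = target integrand
  have hCcont : ContinuousOn (fun s => p s * f s - g s * y s) (Icc 0 T) :=
    (hpc.mul hf).sub (hg.mul hycT)
  have hCint : IntervalIntegrable (fun s => p s * f s - g s * y s) volume 0 T :=
    hCcont.intervalIntegrable_of_Icc hT0.le
  -- F integrable on [0,T]
  have hFc1 : ContinuousOn F (Icc 0 e) := by
    apply ((continuousOn_const.mul (hpc.mono (Icc_subset_Icc le_rfl heT.le))).sub
      (continuousOn_const.mul hpshift)).add (hg.mono (Icc_subset_Icc le_rfl heT.le))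
  have hF1 : IntervalIntegrable F volume 0 e := hFc1.intervalIntegrable_of_Icc he0.le
  have hF2 : IntervalIntegrable F volume e T := by
    have hcont2 : ContinuousOn (fun s => -a₀ * p s - a_d * 0 + g s) (Icc e T) :=
      ((continuousOn_const.mul (hpc.mono (Icc_subset_Icc he0.le le_rfl))).sub
        continuousOn_const).add (hg.mono (Icc_subset_Icc he0.le le_rfl))
    apply (hcont2.intervalIntegrable_of_Icc heT.le).congr
    rw [uIoc_of_le heT.le]
    intro s hs
    rw [hF]; simp only [hpshift0 s hs]
  have hFint : IntervalIntegrable F volume 0 T := hF1.trans hF2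
  -- derivative of y
  have hyderiv : ∀ t ∈ Ioo 0 T, HasDerivAt y (G t) t := by
    intro t ht
    have hnhds : Icc (0:ℝ) T ∈ nhds t := Icc_mem_nhds ht.1 ht.2
    have hInt : IntervalIntegrable G volume 0 t :=
      (hGc.mono (Icc_subset_Icc le_rfl ht.2.le)).intervalIntegrable_of_Icc ht.1.le
    have hmeas : StronglyMeasurableAtFilter G (nhds t) volume :=
      ContinuousOn.stronglyMeasurableAtFilter isOpen_Ioo
        (hGc.mono Ioo_subset_Icc_self) t ht
    have h1 : HasDerivAt (fun u => ∫ s in (0:ℝ)..u, G s) (G t) t :=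
      intervalIntegral.integral_hasDerivAt_right hInt hmeas (hGc.continuousAt hnhds)
    exact h1.congr_of_eventuallyEq (Filter.eventuallyEq_of_mem hnhds hy)
  -- continuity of F away from e
  have hFatAll : ∀ t ∈ Ioo (0:ℝ) T \ {e}, ContinuousAt F t := by
    rintro t ⟨ht, hte⟩
    have hte : t ≠ e := hte
    have hnhds : Icc (0:ℝ) T ∈ nhds t := Icc_mem_nhds ht.1 ht.2
    have hpat : ContinuousAt p t := hpc.continuousAt hnhds
    have hgat : ContinuousAt g t := hg.continuousAt hnhds
    have hsat : ContinuousAt (fun s => p (s + d)) t := by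
      rcases lt_or_gt_of_ne hte with hlt | hgt
      · have hlt' : t < T - d := by rw [← he]; exact hlt
        have hct : ContinuousAt p (t + d) :=
          hpc.continuousAt (Icc_mem_nhds (by linarith [ht.1]) (by linarith))
        exact ContinuousAt.comp hct ((continuous_add_right d).continuousAt)
      · have hev : (fun s => p (s + d)) =ᶠ[nhds t] fun _ => (0:ℝ) := by
          filter_upwards [Ioo_mem_nhds hgt ht.2] with s hs
          exact hpshift0 s ⟨hs.1, hs.2.le⟩
        exact (continuousAt_congr hev).2 continuousAt_const
    exact ((continuousAt_const.mul hpat).sub (continuousAt_const.mul hsat)).add hgat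
  have hopen : IsOpen (Ioo (0:ℝ) T \ {e}) := isOpen_Ioo.sdiff isClosed_singleton
  -- derivative of p (away from e)
  have hpderiv : ∀ t ∈ Ioo 0 T, t ≠ e → HasDerivAt p (-F t) t := by
    intro t ht hte
    have hnhds : Icc (0:ℝ) T ∈ nhds t := Icc_mem_nhds ht.1 ht.2
    have hInt : IntervalIntegrable F volume t T := by
      apply hFint.mono_set
      rw [uIcc_of_le ht.2.le, uIcc_of_le hT0.le]
      exact Icc_subset_Icc ht.1.le le_rfl
    have hmeas : StronglyMeasurableAtFilter F (nhds t) volume :=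
      ContinuousAt.stronglyMeasurableAtFilter hopen hFatAll t ⟨ht, hte⟩
    have h1 : HasDerivAt (fun u => ∫ s in u..T, F s) (-F t) t :=
      intervalIntegral.integral_hasDerivAt_left hInt hmeas (hFatAll t ⟨ht, hte⟩)
    have h2 : HasDerivAt (fun u => p_T + ∫ s in u..T, F s) (-F t) t := h1.const_add p_T
    exact h2.congr_of_eventuallyEq (Filter.eventuallyEq_of_mem hnhds hp)
  -- derivative of the product
  set D : ℝ → ℝ := fun s =>
    a_d * (p (s + d) * y s) - a_d * (p s * y (s - d)) + (p s * f s - g s * y s) with hD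
  have hprod : ∀ t ∈ Ioo 0 T, t ≠ e → HasDerivAt (fun s => p s * y s) (D t) t := by
    intro t ht hte
    have h := (hpderiv t ht hte).mul (hyderiv t ht)
    have heq : -F t * y t + p t * G t = D t := by rw [hF, hG, hD]; ring
    rwa [heq] at h
  -- integrability of D on the two pieces
  have hD1 : IntervalIntegrable D volume 0 e := by
    have : ContinuousOn D (Icc 0 e) := by
      refine ((continuousOn_const.mul hAcont).sub
        (continuousOn_const.mul (hBcont.mono (Icc_subset_Icc le_rfl heT.le)))).add
        (hCcont.mono (Icc_subset_Icc le_rfl heT.le))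
    exact this.intervalIntegrable_of_Icc he0.le
  have hD2 : IntervalIntegrable D volume e T := by
    have hcont2 : ContinuousOn
        (fun s => a_d * 0 - a_d * (p s * y (s - d)) + (p s * f s - g s * y s)) (Icc e T) :=
      (continuousOn_const.sub
        (continuousOn_const.mul (hBcont.mono (Icc_subset_Icc he0.le le_rfl)))).add
        (hCcont.mono (Icc_subset_Icc he0.le le_rfl))
    apply (hcont2.intervalIntegrable_of_Icc heT.le).congr
    rw [uIoc_of_le heT.le]
    intro s hs
    rw [hD]; simp only [hpshift0 s hs, zero_mul, mul_zero]
  -- FTC on the two pieces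
  have hyprodc : ContinuousOn (fun s => p s * y s) (Icc 0 T) := hpc.mul hycT
  have hI1 : ∫ s in (0:ℝ)..e, D s = p e * y e - p 0 * y 0 :=
    integral_eq_sub_of_hasDeriv_right_of_le he0.le
      (hyprodc.mono (Icc_subset_Icc le_rfl heT.le))
      (fun x hx => (hprod x ⟨hx.1, hx.2.trans heT⟩ (ne_of_lt hx.2)).hasDerivWithinAt) hD1
  have hI2 : ∫ s in e..T, D s = p T * y T - p e * y e :=
    integral_eq_sub_of_hasDeriv_right_of_le heT.le
      (hyprodc.mono (Icc_subset_Icc he0.le le_rfl))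
      (fun x hx => (hprod x ⟨he0.trans hx.1, hx.2⟩ (ne_of_gt hx.1)).hasDerivWithinAt) hD2
  have hy0 : y 0 = 0 := hyhist 0 ⟨by linarith, le_rfl⟩
  have hDtot : ∫ s in (0:ℝ)..T, D s = p_T * y T := by
    rw [← intervalIntegral.integral_add_adjacent_intervals hD1 hD2, hI1, hI2, hy0, hpT]
    ring
  -- change of variables: the delay terms cancel
  have hkey : ∫ s in (0:ℝ)..T, p (s + d) * y s = ∫ s in (0:ℝ)..T, p s * y (s - d) := by
    have step1 : ∫ s in (0:ℝ)..T, p (s + d) * y s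
        = ∫ u in d..(T + d), p u * y (u - d) := by
      have h := intervalIntegral.integral_comp_add_right
        (a := (0:ℝ)) (b := T) (fun u => p u * y (u - d)) d
      simpa using h
    have hB2 : IntervalIntegrable (fun u => p u * y (u - d)) volume T (T + d) := by
      apply (_root_.intervalIntegrable_const (c := (0:ℝ))).congr
      rw [uIoc_of_le (by linarith : T ≤ T + d)]
      intro u hu
      beta_reduce
      rw [hpterm u hu, zero_mul]
    have step2 : ∫ u in T..(T + d), p u * y (u - d) = 0 := by
      rw [intervalIntegral.integral_of_le (by linarith : T ≤ T + d)]
      exact setIntegral_eq_zero_of_forall_eq_zero fun u hu => by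
        rw [hpterm u hu, zero_mul]
    have step3 : ∫ u in (0:ℝ)..d, p u * y (u - d) = 0 := by
      rw [intervalIntegral.integral_congr (g := fun _ => (0:ℝ)) ?_,
        intervalIntegral.integral_zero]
      intro u hu
      rw [uIcc_of_le hd.le] at hu
      show p u * y (u - d) = 0
      rw [hyhist (u - d) ⟨by linarith [hu.1], by linarith [hu.2]⟩, mul_zero]
    have hBint_dT : IntervalIntegrable (fun u => p u * y (u - d)) volume d T := by
      apply hBint.mono_set
      rw [uIcc_of_le hdT.le, uIcc_of_le hT0.le]
      exact Icc_subset_Icc hd.le le_rfl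
    have hBint_0d : IntervalIntegrable (fun u => p u * y (u - d)) volume 0 d := by
      apply hBint.mono_set
      rw [uIcc_of_le hd.le, uIcc_of_le hT0.le]
      exact Icc_subset_Icc le_rfl hdT.le
    rw [step1, ← intervalIntegral.integral_add_adjacent_intervals hBint_dT hB2, step2,
      add_zero, ← intervalIntegral.integral_add_adjacent_intervals hBint_0d hBint_dT, step3,
      zero_add]
  -- put it together
  have hsplit : ∫ s in (0:ℝ)..T, D s
      = a_d * (∫ s in (0:ℝ)..T, p (s + d) * y s)
        - a_d * (∫ s in (0:ℝ)..T, p s * y (s - d))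
        + ∫ s in (0:ℝ)..T, (p s * f s - g s * y s) := by
    rw [hD, intervalIntegral.integral_add ((hAint.const_mul a_d).sub (hBint.const_mul a_d))
      hCint, intervalIntegral.integral_sub (hAint.const_mul a_d) (hBint.const_mul a_d),
      intervalIntegral.integral_const_mul, intervalIntegral.integral_const_mul]
  rw [← hDtot, hsplit, hkey]
  ring
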